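/- Let G, O ∈ F with |G| = |O| = k. Let g ∈ G and o ∈ O with o ∉ G \ {g}, and suppose that either g and o have the same color, or, writing c₁ for the color of g and c₂ for the color of o, both |G ∩ V_{c₁}| > |O ∩ V_{c₁}| and |G ∩ V_{c₂}| < |O ∩ V_{c₂}| hold. Then (G \ {g}) ∪ {o} ∈ F. -/
import Mathlib


open Finset

/-- The feasible family `F`: subsets of `V` of size at most `k` whose intersection with
each color class `Vc c` has cardinality between `ℓ c` and `u c`. -/
def Feasible {α : Type*} [DecidableEq α] {C : ℕ} (V : Finset α) (Vc : Fin C → Finset α)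
    (ℓ u : Fin C → ℕ) (k : ℕ) (S : Finset α) : Prop :=
  S ⊆ V ∧ S.card ≤ k ∧ ∀ c, ℓ c ≤ (S ∩ Vc c).card ∧ (S ∩ Vc c).card ≤ u c

/-- A set is extendable if it is contained in some feasible set. -/
def Extendable {α : Type*} [DecidableEq α] {C : ℕ} (V : Finset α) (Vc : Fin C → Finset α)
    (ℓ u : Fin C → ℕ) (k : ℕ) (S : Finset α) : Prop :=
  ∃ S', Feasible V Vc ℓ u k S' ∧ S ⊆ S'

/-- Swapping an element `g` of a feasible `k`-set `G` for an element `o` of a feasible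
`k`-set `O` preserves feasibility, provided `g` and `o` have the same color, or `G` has
strictly more elements than `O` of the color of `g` and strictly fewer of the color of `o`. -/
theorem feasible_swap {α : Type*} [DecidableEq α] (C : ℕ) (V : Finset α)
    (Vc : Fin C → Finset α)
    (hV : V = Finset.univ.biUnion Vc)
    (hdisj : ∀ c d : Fin C, c ≠ d → Disjoint (Vc c) (Vc d))
    (ℓ u : Fin C → ℕ) (hlu : ∀ c, ℓ c ≤ u c) (k : ℕ)
    (G O : Finset α)
    (hG : Feasible V Vc ℓ u k G) (hO : Feasible V Vc ℓ u k O)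
    (hGk : G.card = k) (hOk : O.card = k)
    (g o : α) (hg : g ∈ G) (ho : o ∈ O) (hno : o ∉ G.erase g)
    (c₁ c₂ : Fin C) (hgc : g ∈ Vc c₁) (hoc : o ∈ Vc c₂)
    (hcond : c₁ = c₂ ∨
      ((O ∩ Vc c₁).card < (G ∩ Vc c₁).card ∧ (G ∩ Vc c₂).card < (O ∩ Vc c₂).card)) :
    Feasible V Vc ℓ u k (insert o (G.erase g)) := by
  obtain ⟨hGV, hGk', hGc⟩ := hG
  obtain ⟨hOV, hOk', hOc⟩ := hO
  have hoV : o ∈ V := hOV ho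
  have hk1 : 1 ≤ G.card := Finset.card_pos.mpr ⟨g, hg⟩
  refine ⟨Finset.insert_subset hoV ((Finset.erase_subset _ _).trans hGV), ?_, ?_⟩
  · rw [Finset.card_insert_of_notMem hno, Finset.card_erase_of_mem hg]
    omega
  · intro c
    have hErase : (G.erase g) ∩ Vc c = (G ∩ Vc c).erase g := by
      ext x
      simp only [Finset.mem_erase, Finset.mem_inter]
      tauto
    have hnoM : o ∉ (G ∩ Vc c).erase g := by
      intro h
      exact hno (Finset.mem_erase.mpr ⟨(Finset.mem_erase.mp h).1,
        (Finset.mem_inter.mp (Finset.mem_erase.mp h).2).1⟩)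
    by_cases hc2 : c = c₂
    · have hoVc : o ∈ Vc c := hc2 ▸ hoc
      have hIns : (insert o (G.erase g)) ∩ Vc c = insert o ((G ∩ Vc c).erase g) := by
        rw [Finset.insert_inter_of_mem hoVc, hErase]
      rw [hIns, Finset.card_insert_of_notMem hnoM]
      by_cases hc1 : c = c₁
      · -- same color
        have hgVc : g ∈ G ∩ Vc c := Finset.mem_inter.mpr ⟨hg, hc1 ▸ hgc⟩
        rw [Finset.card_erase_of_mem hgVc]
        have h1 : 1 ≤ (G ∩ Vc c).card := Finset.card_pos.mpr ⟨g, hgVc⟩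
        have := hGc c
        omega
      · -- c = c₂ ≠ c₁
        have hgVc : g ∉ Vc c := by
          intro h
          exact Finset.disjoint_left.mp (hdisj c c₁ (fun he => hc1 he)) h hgc
        have : (G ∩ Vc c).erase g = G ∩ Vc c :=
          Finset.erase_eq_of_notMem (fun h => hgVc (Finset.mem_inter.mp h).2)
        rw [this]
        rcases hcond with he | ⟨h1, h2⟩
        · exact absurd (he ▸ hc2 ▸ rfl : c = c₁) hc1
        · have := hGc c
          have := hOc c
          subst hc2
          omega
    · have hoVc : o ∉ Vc c := fun h =>
        Finset.disjoint_left.mp (hdisj c c₂ (fun he => hc2 he)) h hoc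
      have hIns : (insert o (G.erase g)) ∩ Vc c = (G ∩ Vc c).erase g := by
        rw [Finset.insert_inter_of_notMem hoVc, hErase]
      rw [hIns]
      by_cases hc1 : c = c₁
      · -- c = c₁ ≠ c₂
        have hgVc : g ∈ G ∩ Vc c := Finset.mem_inter.mpr ⟨hg, hc1 ▸ hgc⟩
        rw [Finset.card_erase_of_mem hgVc]
        rcases hcond with he | ⟨h1, h2⟩
        · exact absurd (hc1.trans he) hc2
        · have := hGc c
          have := hOc c
          subst hc1
          omega
      · have hgVc : g ∉ Vc c := fun h =>
          Finset.disjoint_left.mp (hdisj c c₁ (fun he => hc1 he)) h hgc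
        rw [Finset.erase_eq_of_notMem (fun h => hgVc (Finset.mem_inter.mp h).2)]
        exact hGc c
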